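/- Let c > 0, let λ, μ : [0,∞) → ℝ be continuous with λ(t) > 0 for all t, and suppose there is ξ with 0 < μ(t)/λ(t) ≤ ξ < c for all t ≥ 0. Let x : [0,∞) → ℝ be differentiable with x'(t) = λ(t)(x(t) − μ(t)/λ(t))(x(t) − c) for all t ≥ 0 and x(0) ∈ [0, c). Then there exists ψ < c (one may take ψ = max{x(0), ξ}) such that 0 ≤ x(t) ≤ ψ for all t ≥ 0. -/

import Mathlib

open Set Filter

lemma slope_neg_right {x : ℝ → ℝ} {T d : ℝ} (h : HasDerivAt x d T) (hd : d < 0) :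
    ∀ᶠ t in nhdsWithin T (Ioi T), x t < x T := by
  rw [hasDerivAt_iff_tendsto_slope] at h
  have h' : Tendsto (slope x T) (nhdsWithin T (Ioi T)) (nhds d) :=
    h.mono_left (nhdsWithin_mono _ fun t ht => ne_of_gt ht)
  have hs : ∀ᶠ t in nhdsWithin T (Ioi T), slope x T t < 0 :=
    h'.eventually (Iio_mem_nhds hd)
  filter_upwards [hs, self_mem_nhdsWithin] with t hst hTt
  rw [slope_def_field, div_neg_iff] at hst
  rcases hst with ⟨h1, h2⟩ | ⟨h1, h2⟩
  · linarith [mem_Ioi.mp hTt]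
  · linarith

lemma slope_pos_right {x : ℝ → ℝ} {T d : ℝ} (h : HasDerivAt x d T) (hd : 0 < d) :
    ∀ᶠ t in nhdsWithin T (Ioi T), x T < x t := by
  rw [hasDerivAt_iff_tendsto_slope] at h
  have h' : Tendsto (slope x T) (nhdsWithin T (Ioi T)) (nhds d) :=
    h.mono_left (nhdsWithin_mono _ fun t ht => ne_of_gt ht)
  have hs : ∀ᶠ t in nhdsWithin T (Ioi T), 0 < slope x T t :=
    h'.eventually (Ioi_mem_nhds hd)
  filter_upwards [hs, self_mem_nhdsWithin] with t hst hTt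
  rw [slope_def_field, div_pos_iff] at hst
  rcases hst with ⟨h1, h2⟩ | ⟨h1, h2⟩
  · linarith
  · linarith [mem_Ioi.mp hTt]

theorem stmt_8 (c : ℝ) (hc : 0 < c) (lam mu : ℝ → ℝ)
    (hlamc : Continuous lam) (hmuc : Continuous mu)
    (hlam : ∀ t : ℝ, 0 < lam t)
    (ξ : ℝ) (hξ : ξ < c)
    (hratio : ∀ t ≥ (0 : ℝ), 0 < mu t / lam t ∧ mu t / lam t ≤ ξ)
    (x : ℝ → ℝ)
    (hx : ∀ t ≥ (0 : ℝ),
      HasDerivAt x (lam t * (x t - mu t / lam t) * (x t - c)) t)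
    (hx0 : x 0 ∈ Ico (0 : ℝ) c) :
    ∃ ψ : ℝ, ψ < c ∧ ∀ t ≥ (0 : ℝ), x t ∈ Icc (0 : ℝ) ψ := by
  obtain ⟨hx00, hx0c⟩ := hx0
  set ψ : ℝ := (max (x 0) ξ + c) / 2 with hψdef
  have hmaxc : max (x 0) ξ < c := max_lt hx0c hξ
  have hψc : ψ < c := by unfold ψ; linarith
  have hξψ : ξ < ψ := by
    have : ξ ≤ max (x 0) ξ := le_max_right _ _
    unfold ψ; linarith
  have hx0ψ : x 0 < ψ := by
    have : x 0 ≤ max (x 0) ξ := le_max_left _ _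
    unfold ψ; linarith
  have hψpos : 0 < ψ := by
    have : (0:ℝ) ≤ max (x 0) ξ := le_trans hx00 (le_max_left _ _)
    unfold ψ; linarith
  refine ⟨ψ, hψc, ?_⟩
  by_contra hcon
  push_neg at hcon
  set E : Set ℝ := {t : ℝ | 0 ≤ t ∧ x t ∉ Icc (0:ℝ) ψ} with hEdef
  have hEne : E.Nonempty := by
    obtain ⟨t, ht0, htx⟩ := hcon
    exact ⟨t, ht0, htx⟩
  have hEbdd : BddBelow E := ⟨0, fun t ht => ht.1⟩
  set T : ℝ := sInf E with hTdef
  have hT0 : 0 ≤ T := le_csInf hEne fun t ht => ht.1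
  have hcontT : ContinuousAt x T := (hx T hT0).continuousAt
  -- T is not in E
  have hTE : T ∉ E := by
    intro hTEmem
    have hxTnot : x T ∉ Icc (0:ℝ) ψ := hTEmem.2
    rcases eq_or_lt_of_le hT0 with hT0' | hT0'
    · apply hxTnot
      rw [← hT0']
      exact ⟨hx00, le_of_lt hx0ψ⟩
    · -- T > 0 : use continuity to find earlier point in E
      have hopen : IsOpen ((Icc (0:ℝ) ψ)ᶜ) := isClosed_Icc.isOpen_compl
      have hev : ∀ᶠ t in nhds T, x t ∉ Icc (0:ℝ) ψ :=
        hcontT.eventually_mem (hopen.mem_nhds hxTnot)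
      obtain ⟨δ, hδ, hball⟩ := Metric.eventually_nhds_iff.mp hev
      set t := max (T - δ / 2) (T / 2) with htdef
      have ht0 : 0 ≤ t := le_trans (by linarith) (le_max_right _ _)
      have htT : t < T := max_lt (by linarith) (by linarith)
      have htd : dist t T < δ := by
        rw [Real.dist_eq, abs_lt]
        constructor
        · have : T - δ / 2 ≤ t := le_max_left _ _
          linarith
        · linarith
      have : t ∈ E := ⟨ht0, hball htd⟩
      exact absurd (csInf_le hEbdd this) (not_le.mpr htT)
  have hxT : x T ∈ Icc (0:ℝ) ψ := by
    by_contra h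
    exact hTE ⟨hT0, h⟩
  -- eventually to the right of T, x t ∈ Icc 0 ψ
  have hev : ∀ᶠ t in nhdsWithin T (Ioi T), x t ∈ Icc (0:ℝ) ψ := by
    obtain ⟨hxT0, hxTψ⟩ := hxT
    have hcontT' : Tendsto x (nhdsWithin T (Ioi T)) (nhds (x T)) :=
      hcontT.continuousWithinAt
    rcases eq_or_lt_of_le hxT0 with hb | hb
    · -- x T = 0, derivative positive
      have hd := hx T hT0
      have hm := hratio T hT0
      have hdpos : 0 < lam T * (x T - mu T / lam T) * (x T - c) := by
        rw [← hb]
        nlinarith [mul_pos (mul_pos (hlam T) hm.1) hc]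
      have h1 := slope_pos_right hd hdpos
      have h2 : ∀ᶠ t in nhdsWithin T (Ioi T), x t < ψ := by
        have : x T < ψ := by rw [← hb]; exact hψpos
        exact hcontT'.eventually (Filter.Tendsto.eventually_lt_const this tendsto_id |>.mono fun _ h => h) |>.mono fun _ h => h
      filter_upwards [h1, h2] with t h1t h2t
      exact ⟨le_of_lt (by rw [← hb] at h1t; linarith), le_of_lt h2t⟩
    rcases eq_or_lt_of_le hxTψ with hb' | hb'
    · -- x T = ψ, derivative negative
      have hd := hx T hT0
      have hm := hratio T hT0
      have hdneg : lam T * (x T - mu T / lam T) * (x T - c) < 0 := by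
        have := hlam T
        have h1 : mu T / lam T < x T := by rw [hb']; linarith [hm.2]
        have h2 : x T < c := by rw [hb']; exact hψc
        have := mul_neg_of_pos_of_neg (mul_pos (hlam T) (sub_pos.2 h1)) (sub_neg.2 h2)
        linarith
      have h1 := slope_neg_right hd hdneg
      have h2 : ∀ᶠ t in nhdsWithin T (Ioi T), 0 < x t :=
        hcontT'.eventually (Filter.Tendsto.eventually_const_lt hb tendsto_id) |>.mono fun _ h => h
      filter_upwards [h1, h2] with t h1t h2t
      exact ⟨le_of_lt h2t, le_of_lt (by rw [hb'] at h1t; linarith)⟩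
    · -- interior
      have h1 : ∀ᶠ t in nhdsWithin T (Ioi T), 0 < x t :=
        hcontT'.eventually (Filter.Tendsto.eventually_const_lt hb tendsto_id) |>.mono fun _ h => h
      have h2 : ∀ᶠ t in nhdsWithin T (Ioi T), x t < ψ :=
        hcontT'.eventually (Filter.Tendsto.eventually_lt_const hb' tendsto_id) |>.mono fun _ h => h
      filter_upwards [h1, h2] with t h1t h2t
      exact ⟨le_of_lt h1t, le_of_lt h2t⟩
  -- extract δ and contradict infimum
  rw [eventually_nhdsWithin_iff, Metric.eventually_nhds_iff] at hev
  obtain ⟨δ, hδ, hball⟩ := hev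
  obtain ⟨t, htE, htlt⟩ := exists_lt_of_csInf_lt hEne (show sInf E < T + δ by linarith)
  have htT : T ≤ t := csInf_le hEbdd htE
  have htne : T ≠ t := fun h => hTE (h ▸ htE)
  have htT' : T < t := lt_of_le_of_ne htT htne
  have : x t ∈ Icc (0:ℝ) ψ := by
    apply hball
    · rw [Real.dist_eq, abs_lt]; constructor <;> linarith
    · exact htT'
  exact htE.2 this
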